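/- Suppose in addition that the spectral (operator 2-)norm of W − I is at most 2, i.e. ‖(W − I)v‖ ≤ 2‖v‖ and ‖(W − I)ᵀv‖ ≤ 2‖v‖ for all v ∈ ℝ^m. Let Y = (y_1,…,y_m) satisfy the first-order maximality condition for Φ(X, Λ, ·) and let Ỹ = (ỹ_1,…,ỹ_m) satisfy the first-order maximality condition for Φ(X̃, Λ̃, ·). Then Σ_{i=1}^m ‖y_i − ỹ_i‖² ≤ 2κ² Σ_{i=1}^m ‖x_i − x̃_i‖² + 2mκ² Σ_{i=1}^m ‖λ_i − λ̃_i‖², where κ = L/μ. -/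

import Mathlib

open scoped BigOperators RealInnerProductSpace

set_option maxHeartbeats 2000000 in
/-- Lipschitz continuity of the solution map `S_Φ` in `(X, Λ)`:
if `‖W − I‖₂ ≤ 2`, `Y` satisfies the first-order maximality condition for `Φ(X, Λ, ·)`
and `Ỹ` that for `Φ(X̃, Λ̃, ·)`, then
`Σ ‖y_i − ỹ_i‖² ≤ 2κ² Σ ‖x_i − x̃_i‖² + 2mκ² Σ ‖λ_i − λ̃_i‖²`, where `κ = L/μ`. -/
theorem dgdmax_solution_map_lipschitz
    {m n₁ n₂ : ℕ} (hm : 0 < m) (hn₁ : 0 < n₁) (hn₂ : 0 < n₂)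
    (L μ : ℝ) (hμ : 0 < μ) (hLμ : μ ≤ L)
    (f : Fin m → EuclideanSpace ℝ (Fin n₁) → EuclideanSpace ℝ (Fin n₂) → ℝ)
    (Gx : Fin m → EuclideanSpace ℝ (Fin n₁) → EuclideanSpace ℝ (Fin n₂) →
      EuclideanSpace ℝ (Fin n₁))
    (Gy : Fin m → EuclideanSpace ℝ (Fin n₁) → EuclideanSpace ℝ (Fin n₂) →
      EuclideanSpace ℝ (Fin n₂))
    (hGx : ∀ i x y, HasGradientAt (fun x' => f i x' y) (Gx i x y) x)
    (hGy : ∀ i x y, HasGradientAt (fun y' => f i x y') (Gy i x y) y)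
    (hLip : ∀ i x y x' y',
      ‖Gx i x y - Gx i x' y'‖ ^ 2 + ‖Gy i x y - Gy i x' y'‖ ^ 2
        ≤ L ^ 2 * (‖x - x'‖ ^ 2 + ‖y - y'‖ ^ 2))
    (hconc : ∀ i x y y', ⟪y - y', Gy i x y - Gy i x y'⟫ ≤ -μ * ‖y - y'‖ ^ 2)
    (h : EuclideanSpace ℝ (Fin n₂) → ℝ) (hconv : ConvexOn ℝ Set.univ h)
    (w : Fin m → Fin m → ℝ)
    -- `‖W − I‖₂ ≤ 2` (squared form), for `W − I` and its transpose
    (hWI : ∀ v : Fin m → ℝ,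
      ∑ i, (∑ j, (w i j - if i = j then 1 else 0) * v j) ^ 2 ≤ 4 * ∑ i, (v i) ^ 2)
    (hWIt : ∀ v : Fin m → ℝ,
      ∑ i, (∑ j, (w j i - if i = j then 1 else 0) * v j) ^ 2 ≤ 4 * ∑ i, (v i) ^ 2)
    (X X' : Fin m → EuclideanSpace ℝ (Fin n₁))
    (Λ Λ' : Fin m → EuclideanSpace ℝ (Fin n₂))
    (Y Y' : Fin m → EuclideanSpace ℝ (Fin n₂))
    (hY : ∃ ζ : Fin m → EuclideanSpace ℝ (Fin n₂),
      (∀ i, ∀ z, h (Y i) + ⟪ζ i, z - Y i⟫ ≤ h z) ∧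
      (∀ i, (1 / (m : ℝ)) • (Gy i (X i) (Y i) - ζ i)
          = (L / (2 * Real.sqrt (m : ℝ))) •
              ∑ j, (w j i - if i = j then 1 else 0) • Λ j))
    (hY' : ∃ ζ : Fin m → EuclideanSpace ℝ (Fin n₂),
      (∀ i, ∀ z, h (Y' i) + ⟪ζ i, z - Y' i⟫ ≤ h z) ∧
      (∀ i, (1 / (m : ℝ)) • (Gy i (X' i) (Y' i) - ζ i)
          = (L / (2 * Real.sqrt (m : ℝ))) •
              ∑ j, (w j i - if i = j then 1 else 0) • Λ' j)) :
    ∑ i, ‖Y i - Y' i‖ ^ 2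
      ≤ 2 * (L / μ) ^ 2 * ∑ i, ‖X i - X' i‖ ^ 2
        + 2 * (m : ℝ) * (L / μ) ^ 2 * ∑ i, ‖Λ i - Λ' i‖ ^ 2 := by
  obtain ⟨ζ, hζsub, hζeq⟩ := hY
  obtain ⟨ζ', hζ'sub, hζ'eq⟩ := hY'
  have hm' : (0:ℝ) < m := by exact_mod_cast hm
  have hL : (0:ℝ) < L := lt_of_lt_of_le hμ hLμ
  have hsm : Real.sqrt (m:ℝ) > 0 := Real.sqrt_pos.mpr hm'
  set D : Fin m → EuclideanSpace ℝ (Fin n₂) :=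
    fun i => ∑ j, (w j i - if i = j then 1 else 0) • (Λ j - Λ' j) with hD
  set s : ℝ := L * Real.sqrt (m:ℝ) / 2 with hs
  have hs0 : 0 ≤ s := by positivity
  have hssq : s ^ 2 = (m:ℝ) * L ^ 2 / 4 := by
    rw [hs]
    rw [div_pow, mul_pow, Real.sq_sqrt hm'.le]
    ring
  have hms : (m:ℝ) * (L / (2 * Real.sqrt (m:ℝ))) = s := by
    rw [hs]
    rw [eq_div_iff (by norm_num)]
    field_simp
    nlinarith [Real.mul_self_sqrt hm'.le]
  -- key per-index inequality
  have key : ∀ i, μ * ‖Y i - Y' i‖ ≤ L * ‖X i - X' i‖ + s * ‖D i‖ := by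
    intro i
    -- equation from the two optimality conditions
    have heq : Gy i (X i) (Y i) - ζ i - (Gy i (X' i) (Y' i) - ζ' i) = s • D i := by
      have h3 : ((1:ℝ)/(m:ℝ)) • (Gy i (X i) (Y i) - ζ i - (Gy i (X' i) (Y' i) - ζ' i))
          = (L / (2 * Real.sqrt (m:ℝ))) • D i := by
        rw [smul_sub, hζeq i, hζ'eq i, ← smul_sub, ← Finset.sum_sub_distrib]
        congr 1
        apply Finset.sum_congr rfl
        intro j _
        rw [← smul_sub]
      have h4 := congrArg (fun v => (m:ℝ) • v) h3
      simp only [smul_smul] at h4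
      rw [mul_one_div, div_self (ne_of_gt hm'), one_smul] at h4
      rw [h4, hms]
    -- monotonicity of the subgradient
    have hmono : 0 ≤ ⟪Y i - Y' i, ζ i - ζ' i⟫ := by
      have h1 := hζsub i (Y' i)
      have h2 := hζ'sub i (Y i)
      have e : ⟪Y i - Y' i, ζ i - ζ' i⟫
          = -(⟪ζ i, Y' i - Y i⟫ + ⟪ζ' i, Y i - Y' i⟫) := by
        simp only [inner_sub_left, inner_sub_right, real_inner_comm (Y i)]
        rw [real_inner_comm (Y' i) (ζ i), real_inner_comm (Y' i) (ζ' i)]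
        ring
      rw [e]
      linarith
    -- strong concavity
    have hsc := hconc i (X i) (Y i) (Y' i)
    -- Lipschitz cross term
    have hcross : ‖Gy i (X i) (Y' i) - Gy i (X' i) (Y' i)‖ ≤ L * ‖X i - X' i‖ := by
      have hlip := hLip i (X i) (Y' i) (X' i) (Y' i)
      simp only [sub_self, norm_zero] at hlip
      have hg2 : ‖Gy i (X i) (Y' i) - Gy i (X' i) (Y' i)‖ ^ 2 ≤ (L * ‖X i - X' i‖) ^ 2 := by
        nlinarith [sq_nonneg ‖Gx i (X i) (Y' i) - Gx i (X' i) (Y' i)‖]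
      have h1 : (0:ℝ) ≤ ‖Gy i (X i) (Y' i) - Gy i (X' i) (Y' i)‖ := norm_nonneg _
      have h2 : (0:ℝ) ≤ L * ‖X i - X' i‖ := by positivity
      nlinarith [hg2, h1, h2]
    -- take inner product of heq with Y i - Y' i
    have hip : ⟪Y i - Y' i, Gy i (X i) (Y i) - Gy i (X' i) (Y' i)⟫ - ⟪Y i - Y' i, ζ i - ζ' i⟫
        = s * ⟪Y i - Y' i, D i⟫ := by
      have h5 := congrArg (fun v => ⟪Y i - Y' i, v⟫) heq
      simp only [real_inner_smul_right, inner_sub_right] at h5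
      simp only [inner_sub_right]
      linarith [h5]
    -- bound RHS below
    have hrhs : -(s * (‖Y i - Y' i‖ * ‖D i‖)) ≤ s * ⟪Y i - Y' i, D i⟫ := by
      have hcs := abs_real_inner_le_norm (Y i - Y' i) (D i)
      have h6 : -(‖Y i - Y' i‖ * ‖D i‖) ≤ ⟪Y i - Y' i, D i⟫ := by
        have := neg_abs_le (⟪Y i - Y' i, D i⟫)
        linarith
      calc -(s * (‖Y i - Y' i‖ * ‖D i‖)) = s * (-(‖Y i - Y' i‖ * ‖D i‖)) := by ring
        _ ≤ s * ⟪Y i - Y' i, D i⟫ := mul_le_mul_of_nonneg_left h6 hs0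
    -- bound LHS above
    have hlhs : ⟪Y i - Y' i, Gy i (X i) (Y i) - Gy i (X' i) (Y' i)⟫ - ⟪Y i - Y' i, ζ i - ζ' i⟫
        ≤ -μ * ‖Y i - Y' i‖ ^ 2 + ‖Y i - Y' i‖ * (L * ‖X i - X' i‖) := by
      have hsplit : ⟪Y i - Y' i, Gy i (X i) (Y i) - Gy i (X' i) (Y' i)⟫
          = ⟪Y i - Y' i, Gy i (X i) (Y i) - Gy i (X i) (Y' i)⟫
            + ⟪Y i - Y' i, Gy i (X i) (Y' i) - Gy i (X' i) (Y' i)⟫ := by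
        rw [← inner_add_right]
        congr 1
        abel
      have hcs2 : ⟪Y i - Y' i, Gy i (X i) (Y' i) - Gy i (X' i) (Y' i)⟫
          ≤ ‖Y i - Y' i‖ * ‖Gy i (X i) (Y' i) - Gy i (X' i) (Y' i)‖ :=
        real_inner_le_norm _ _
      have := mul_le_mul_of_nonneg_left hcross (norm_nonneg (Y i - Y' i))
      linarith
    have hmain : μ * ‖Y i - Y' i‖ ^ 2
        ≤ ‖Y i - Y' i‖ * (L * ‖X i - X' i‖) + s * (‖Y i - Y' i‖ * ‖D i‖) := by
      rw [hip] at hlhs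
      linarith
    rcases eq_or_lt_of_le (norm_nonneg (Y i - Y' i)) with h0 | h0
    · rw [← h0]
      have : (0:ℝ) ≤ L * ‖X i - X' i‖ + s * ‖D i‖ := by positivity
      linarith
    · nlinarith [hmain, h0]
  -- squared per-index inequality
  have key2 : ∀ i, ‖Y i - Y' i‖ ^ 2
      ≤ 2 * (L / μ) ^ 2 * ‖X i - X' i‖ ^ 2 + (m:ℝ) / 2 * (L / μ) ^ 2 * ‖D i‖ ^ 2 := by
    intro i
    have hk := key i
    have h2 : μ ^ 2 * ‖Y i - Y' i‖ ^ 2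
        ≤ 2 * L ^ 2 * ‖X i - X' i‖ ^ 2 + (m:ℝ) / 2 * L ^ 2 * ‖D i‖ ^ 2 := by
      nlinarith [sq_nonneg (L * ‖X i - X' i‖ - s * ‖D i‖), norm_nonneg (Y i - Y' i),
        norm_nonneg (X i - X' i), norm_nonneg (D i), hssq,
        mul_le_mul_of_nonneg_left hk (mul_nonneg hμ.le (norm_nonneg (Y i - Y' i)))]
    have hμ2 : (0:ℝ) < μ ^ 2 := by positivity
    rw [div_pow]
    rw [show 2 * (L ^ 2 / μ ^ 2) * ‖X i - X' i‖ ^ 2 + (m:ℝ) / 2 * (L ^ 2 / μ ^ 2) * ‖D i‖ ^ 2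
        = (2 * L ^ 2 * ‖X i - X' i‖ ^ 2 + (m:ℝ) / 2 * L ^ 2 * ‖D i‖ ^ 2) / μ ^ 2 by
      field_simp]
    rw [le_div_iff₀ hμ2]
    linarith [h2]
  -- bound on ∑ ‖D i‖²
  have hnormsq : ∀ (x : EuclideanSpace ℝ (Fin n₂)), ‖x‖ ^ 2 = ∑ k, (x k) ^ 2 := by
    intro x
    rw [EuclideanSpace.norm_eq, Real.sq_sqrt (by positivity)]
    simp [Real.norm_eq_abs, sq_abs]
  have hDk : ∀ i k, D i k = ∑ j, (w j i - if i = j then 1 else 0) * ((Λ j) k - (Λ' j) k) := by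
    intro i k
    rw [hD]
    simp only
    rw [WithLp.ofLp_sum, Finset.sum_apply]
    apply Finset.sum_congr rfl
    intro j _
    simp [PiLp.smul_apply, PiLp.sub_apply, smul_eq_mul]
  have hDsum : ∑ i, ‖D i‖ ^ 2 ≤ 4 * ∑ j, ‖Λ j - Λ' j‖ ^ 2 := by
    calc ∑ i, ‖D i‖ ^ 2 = ∑ i, ∑ k, (D i k) ^ 2 := by
          apply Finset.sum_congr rfl; intro i _; exact hnormsq (D i)
      _ = ∑ k, ∑ i, (D i k) ^ 2 := Finset.sum_comm
      _ ≤ ∑ k, 4 * ∑ j, ((Λ j) k - (Λ' j) k) ^ 2 := by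
          apply Finset.sum_le_sum
          intro k _
          have := hWIt (fun j => (Λ j) k - (Λ' j) k)
          calc ∑ i, (D i k) ^ 2
              = ∑ i, (∑ j, (w j i - if i = j then 1 else 0) * ((Λ j) k - (Λ' j) k)) ^ 2 := by
                apply Finset.sum_congr rfl; intro i _; exact congrArg (· ^ 2) (hDk i k)
            _ ≤ 4 * ∑ j, ((Λ j) k - (Λ' j) k) ^ 2 := this
      _ = 4 * ∑ j, ∑ k, ((Λ j) k - (Λ' j) k) ^ 2 := by
          rw [← Finset.mul_sum]; exact congrArg _ Finset.sum_comm
      _ = 4 * ∑ j, ‖Λ j - Λ' j‖ ^ 2 := by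
          congr 1
          apply Finset.sum_congr rfl
          intro j _
          rw [hnormsq (Λ j - Λ' j)]
          apply Finset.sum_congr rfl
          intro k _
          simp [PiLp.sub_apply]
  -- combine
  have hκ2 : (0:ℝ) ≤ (L / μ) ^ 2 := sq_nonneg _
  calc ∑ i, ‖Y i - Y' i‖ ^ 2
      ≤ ∑ i, (2 * (L / μ) ^ 2 * ‖X i - X' i‖ ^ 2 + (m:ℝ) / 2 * (L / μ) ^ 2 * ‖D i‖ ^ 2) :=
        Finset.sum_le_sum (fun i _ => key2 i)
    _ = 2 * (L / μ) ^ 2 * ∑ i, ‖X i - X' i‖ ^ 2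
        + (m:ℝ) / 2 * (L / μ) ^ 2 * ∑ i, ‖D i‖ ^ 2 := by
        rw [Finset.sum_add_distrib, Finset.mul_sum, Finset.mul_sum]
    _ ≤ 2 * (L / μ) ^ 2 * ∑ i, ‖X i - X' i‖ ^ 2
        + (m:ℝ) / 2 * (L / μ) ^ 2 * (4 * ∑ i, ‖Λ i - Λ' i‖ ^ 2) := by
        have hc : (0:ℝ) ≤ (m:ℝ) / 2 * (L / μ) ^ 2 := by positivity
        nlinarith [mul_le_mul_of_nonneg_left hDsum hc]
    _ = 2 * (L / μ) ^ 2 * ∑ i, ‖X i - X' i‖ ^ 2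
        + 2 * (m:ℝ) * (L / μ) ^ 2 * ∑ i, ‖Λ i - Λ' i‖ ^ 2 := by ring
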